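/- Let V be a real vector space of finite dimension 4 and let e₁, e₂, e₃ ∈ V be linearly independent. The linear map ⋀²V → ⋀³V × ⋀³V × ⋀³V defined by B ↦ (e₁∧B, e₂∧B, e₃∧B) is injective. (This is the pointwise statement that the boundary map W_{∂}^{(0,2)} is injective.) -/

import Mathlib

open ExteriorAlgebra

variable {V : Type*} [AddCommGroup V] [Module ℝ V]

/-- A linear functional on the exterior algebra induced by an alternating 3-form. -/
noncomputable def phi3 (ω : V [⋀^Fin 3]→ₗ[ℝ] ℝ) :
    ExteriorAlgebra ℝ V →ₗ[ℝ] ℝ :=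
  liftAlternating (fun n => match n with | 3 => ω | _ => 0)

lemma ιMulti_three (x y z : V) :
    ιMulti ℝ 3 ![x, y, z] = ι ℝ x * ι ℝ y * ι ℝ z := by
  simp [ιMulti_apply, List.ofFn_succ, mul_assoc]

lemma phi3_apply (ω : V [⋀^Fin 3]→ₗ[ℝ] ℝ) (x y z : V) :
    phi3 ω (ι ℝ x * ι ℝ y * ι ℝ z) = ω ![x, y, z] := by
  rw [← ιMulti_three]
  exact liftAlternating_apply_ιMulti _ _

/-- The alternating 3-form given by the minor of the coordinates at `i, j, k`. -/
noncomputable def trip (b : Module.Basis (Fin 4) ℝ V) (i j k : Fin 4) : V [⋀^Fin 3]→ₗ[ℝ] ℝ :=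
  (Matrix.detRowAlternating).compLinearMap
    (LinearMap.pi fun t : Fin 3 => b.coord (![i, j, k] t))

/-- Kronecker delta. -/
noncomputable def kd (p i : Fin 4) : ℝ := if p = i then 1 else 0

lemma phi3_trip (b : Module.Basis (Fin 4) ℝ V) (i j k p q r : Fin 4) :
    phi3 (trip b i j k) (ι ℝ (b p) * ι ℝ (b q) * ι ℝ (b r)) =
      kd p i * kd q j * kd r k - kd p i * kd q k * kd r j - kd p j * kd q i * kd r k
      + kd p j * kd q k * kd r i + kd p k * kd q i * kd r j - kd p k * kd q j * kd r i := by
  rw [phi3_apply]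
  show Matrix.det (Matrix.of fun s t =>
    (LinearMap.pi fun t : Fin 3 => b.coord (![i,j,k] t)) (![b p, b q, b r] s) t) = _
  rw [Matrix.det_fin_three]
  simp only [Matrix.of_apply, LinearMap.pi_apply, Module.Basis.coord_apply, Module.Basis.repr_self,
    Finsupp.single_apply, Matrix.cons_val_zero, Matrix.cons_val_one, Matrix.head_cons,
    Matrix.cons_val_two, Matrix.tail_cons, kd]

/-- The pointwise boundary map `W_{∂}^{(0,2)} : ⋀²V → ⋀³V × ⋀³V × ⋀³V`,
`B ↦ (e₁∧B, e₂∧B, e₃∧B)` (valued in the exterior algebra). -/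
noncomputable def Wb02 (e₁ e₂ e₃ : V) :
    (⋀[ℝ]^2 V) →ₗ[ℝ]
      ExteriorAlgebra ℝ V × ExteriorAlgebra ℝ V × ExteriorAlgebra ℝ V :=
  ((LinearMap.mulLeft ℝ (ι ℝ e₁)).comp (⋀[ℝ]^2 V).subtype).prod
    ((((LinearMap.mulLeft ℝ (ι ℝ e₂)).comp (⋀[ℝ]^2 V).subtype)).prod
      ((LinearMap.mulLeft ℝ (ι ℝ e₃)).comp (⋀[ℝ]^2 V).subtype))

/-- For `V` 4-dimensional and `e₁, e₂, e₃` linearly independent, the map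
`B ↦ (e₁∧B, e₂∧B, e₃∧B)` on `⋀²V` is injective. -/
theorem Wb02_injective [FiniteDimensional ℝ V]
    (hdim : Module.finrank ℝ V = 4) (e₁ e₂ e₃ : V)
    (hind : LinearIndependent ℝ ![e₁, e₂, e₃]) :
    Function.Injective (Wb02 e₁ e₂ e₃) := by
  rw [← LinearMap.ker_eq_bot, LinearMap.ker_eq_bot']
  intro B hB
  -- extract the three hypotheses
  simp only [Wb02, LinearMap.prod_apply, LinearMap.coe_comp, Function.comp_apply,
    LinearMap.mulLeft_apply, Submodule.coe_subtype, Function.prod, Prod.mk_eq_zero] at hB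
  obtain ⟨h1, h2, h3⟩ := hB
  -- extend to a basis
  obtain ⟨e₄, he₄⟩ : ∃ x, x ∉ Submodule.span ℝ (Set.range ![e₁, e₂, e₃]) := by
    by_contra h
    push_neg at h
    have htop : Submodule.span ℝ (Set.range ![e₁, e₂, e₃]) = ⊤ := Submodule.eq_top_iff'.2 h
    have := finrank_le_of_span_eq_top htop
    simp [hdim] at this
  have hsnoc : LinearIndependent ℝ (Fin.snoc ![e₁, e₂, e₃] e₄ : Fin 4 → V) :=
    linearIndependent_fin_snoc.2 ⟨hind, he₄⟩
  let b : Module.Basis (Fin 4) ℝ V :=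
    basisOfLinearIndependentOfCardEqFinrank hsnoc (by simp [hdim])
  have hb : ⇑b = Fin.snoc ![e₁, e₂, e₃] e₄ :=
    coe_basisOfLinearIndependentOfCardEqFinrank hsnoc _
  have hb0 : b 0 = e₁ := by rw [hb]; simp [Fin.snoc]
  have hb1 : b 1 = e₂ := by rw [hb]; simp [Fin.snoc]
  have hb2 : b 2 = e₃ := by rw [hb]; simp [Fin.snoc]; rfl
  rw [← hb0] at h1
  rw [← hb1] at h2
  rw [← hb2] at h3
  -- the six basic 2-vectors
  set w : Fin 6 → ExteriorAlgebra ℝ V :=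
    ![ι ℝ (b 0) * ι ℝ (b 1), ι ℝ (b 0) * ι ℝ (b 2), ι ℝ (b 0) * ι ℝ (b 3),
      ι ℝ (b 1) * ι ℝ (b 2), ι ℝ (b 1) * ι ℝ (b 3), ι ℝ (b 2) * ι ℝ (b 3)] with hw
  have hneg : ∀ x y : V, ι ℝ x * ι ℝ y = -(ι ℝ y * ι ℝ x) := fun x y =>
    eq_neg_of_add_eq_zero_left (ι_add_mul_swap x y)
  have hpair : ∀ i j : Fin 4, ι ℝ (b i) * ι ℝ (b j) ∈ Submodule.span ℝ (Set.range w) := by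
    intro i j
    fin_cases i <;> fin_cases j
    all_goals first
      | (rw [ι_sq_zero]; exact zero_mem _)
      | exact Submodule.subset_span ⟨0, rfl⟩
      | exact Submodule.subset_span ⟨1, rfl⟩
      | exact Submodule.subset_span ⟨2, rfl⟩
      | exact Submodule.subset_span ⟨3, rfl⟩
      | exact Submodule.subset_span ⟨4, rfl⟩
      | exact Submodule.subset_span ⟨5, rfl⟩
      | (rw [hneg]; exact neg_mem (Submodule.subset_span ⟨0, rfl⟩))
      | (rw [hneg]; exact neg_mem (Submodule.subset_span ⟨1, rfl⟩))
      | (rw [hneg]; exact neg_mem (Submodule.subset_span ⟨2, rfl⟩))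
      | (rw [hneg]; exact neg_mem (Submodule.subset_span ⟨3, rfl⟩))
      | (rw [hneg]; exact neg_mem (Submodule.subset_span ⟨4, rfl⟩))
      | (rw [hneg]; exact neg_mem (Submodule.subset_span ⟨5, rfl⟩))
  -- B is a combination of the six basic 2-vectors
  have hB2 : (B : ExteriorAlgebra ℝ V) ∈
      Submodule.span ℝ (Set.range (ιMulti ℝ 2 (M := V))) := by
    rw [ιMulti_span_fixedDegree]; exact B.2
  have hmem : (B : ExteriorAlgebra ℝ V) ∈ Submodule.span ℝ (Set.range w) := by
    refine Submodule.span_le.2 ?_ hB2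
    rintro _ ⟨v, rfl⟩
    have h2v : ιMulti ℝ 2 v = ι ℝ (v 0) * ι ℝ (v 1) := by
      simp [ιMulti_apply, List.ofFn_succ, Matrix.vecTail]
    rw [h2v, ← b.sum_repr (v 0), ← b.sum_repr (v 1), map_sum, map_sum, Finset.sum_mul]
    refine Submodule.sum_mem _ fun i _ => ?_
    rw [Finset.mul_sum]
    refine Submodule.sum_mem _ fun j _ => ?_
    rw [map_smul, map_smul, smul_mul_assoc, mul_smul_comm]
    exact Submodule.smul_mem _ _ (Submodule.smul_mem _ _ (hpair i j))
  obtain ⟨c, hc⟩ := (Submodule.mem_span_range_iff_exists_fun ℝ).1 hmem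
  -- the key scalar equations
  have key : ∀ (a i j k : Fin 4), ι ℝ (b a) * (B : ExteriorAlgebra ℝ V) = 0 →
      ∑ m : Fin 6, c m * phi3 (trip b i j k) (ι ℝ (b a) * w m) = 0 := by
    intro a i j k h
    have h' := congrArg (phi3 (trip b i j k)) h
    rw [← hc, Finset.mul_sum] at h'
    simpa [mul_smul_comm] using h'
  have k0 := key 2 0 1 2 h3
  have k1 := key 1 0 1 2 h2
  have k2 := key 1 0 1 3 h2
  have k3 := key 0 0 1 2 h1
  have k4 := key 0 0 1 3 h1
  have k5 := key 0 0 2 3 h1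
  have hw0 : w 0 = ι ℝ (b 0) * ι ℝ (b 1) := by rw [hw]; rfl
  have hw1 : w 1 = ι ℝ (b 0) * ι ℝ (b 2) := by rw [hw]; rfl
  have hw2 : w 2 = ι ℝ (b 0) * ι ℝ (b 3) := by rw [hw]; rfl
  have hw3 : w 3 = ι ℝ (b 1) * ι ℝ (b 2) := by rw [hw]; rfl
  have hw4 : w 4 = ι ℝ (b 1) * ι ℝ (b 3) := by rw [hw]; rfl
  have hw5 : w 5 = ι ℝ (b 2) * ι ℝ (b 3) := by rw [hw]; rfl
  simp only [Fin.sum_univ_six, hw0, hw1, hw2, hw3, hw4, hw5,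
    ← mul_assoc, phi3_trip, kd] at k0 k1 k2 k3 k4 k5
  simp (config := {decide := true}) only [if_true, if_false] at k0 k1 k2 k3 k4 k5
  norm_num at k0 k1 k2 k3 k4 k5
  -- conclude
  have hBz : (B : ExteriorAlgebra ℝ V) = 0 := by
    rw [← hc, Fin.sum_univ_six, k0, k1, k2, k3, k4, k5]
    simp
  exact Subtype.ext hBz
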